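/- The procedure EMB(X) of the paper, which recursively decides embeddability of a triangulated compact orientable 3-manifold X with boundary into S^3, terminates: along every branch of the recursion tree, the lexicographically ordered vector g_≥(X) of genera of boundary components (sorted in non-increasing order, padded with zeros) does not increase under passing to connected components or prime summands, and strictly decreases under a boundary compression or attachment of a 2-handle along an essential boundary curve. -/

import Mathlib

/-- The multiset of genera of boundary components, sorted in non-increasing order. -/
def sortedDesc (s : Multiset ℕ) : List ℕ := (Multiset.sort s (· ≤ ·)).reverse

/-- Pad a list with zeros on the right to length n. -/
def pad (l : List ℕ) (n : ℕ) : List ℕ := l ++ List.replicate (n - l.length) 0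

/-- Strict lexicographic order on genus vectors g_≥: sort in non-increasing order, pad the
shorter with zeros, compare lexicographically. -/
def gvecLT (s t : Multiset ℕ) : Prop :=
  List.Lex (· < ·)
    (pad (sortedDesc s) (max (Multiset.card s) (Multiset.card t)))
    (pad (sortedDesc t) (max (Multiset.card s) (Multiset.card t)))

/-- Non-strict version of the order on genus vectors (equality up to zero padding). -/
def gvecLE (s t : Multiset ℕ) : Prop :=
  gvecLT s t ∨
    pad (sortedDesc s) (max (Multiset.card s) (Multiset.card t)) =
      pad (sortedDesc t) (max (Multiset.card s) (Multiset.card t))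

/-- The effect on the multiset of boundary genera of a boundary compression or of
attaching a 2-handle along an essential boundary curve: exactly one boundary component of
genus g ≥ 1 is affected; it is either split into two components of nonzero genus whose
genera sum to g, or it remains in one piece with its genus decreased by one. -/
def BoundaryStep (s t : Multiset ℕ) : Prop :=
  ∃ g ∈ s, 1 ≤ g ∧
    ((∃ g₁ g₂, 1 ≤ g₁ ∧ 1 ≤ g₂ ∧ g₁ + g₂ = g ∧ t = g₁ ::ₘ g₂ ::ₘ s.erase g) ∨
      t = (g - 1) ::ₘ s.erase g)

/- ### Auxiliary lemmas -/

lemma sort_decomp (s : Multiset ℕ) (k : ℕ) :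
    Multiset.sort s (· ≤ ·) =
      Multiset.sort (s.filter (fun x => x < k)) (· ≤ ·) ++
        (List.replicate (s.count k) k ++
          Multiset.sort (s.filter (fun x => k < x)) (· ≤ ·)) := by
  refine (fun hp h1 h2 => List.Perm.eq_of_pairwise' (r := (· ≤ ·)) h1 h2 hp) ?_ ?_ ?_
  · rw [← Multiset.coe_eq_coe]
    simp only [Multiset.sort_eq, ← Multiset.coe_add, Multiset.coe_replicate]
    ext j
    simp only [Multiset.count_add, Multiset.count_filter, Multiset.count_replicate]
    rcases lt_trichotomy j k with h | rfl | h
    · simp [h, (show ¬ k < j by omega), (show k ≠ j by omega)]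
    · simp
    · simp [h, (show ¬ j < k by omega), (show k ≠ j by omega)]
  · exact Multiset.pairwise_sort _ _
  · rw [List.pairwise_append]
    refine ⟨Multiset.pairwise_sort _ _, ?_, ?_⟩
    · rw [List.pairwise_append]
      refine ⟨?_, Multiset.pairwise_sort _ _, ?_⟩
      · exact List.pairwise_replicate.2 (Or.inr le_rfl)
      · intro x hx y hy
        have hx' := List.eq_of_mem_replicate hx
        have hy' := (Multiset.mem_filter.1 ((Multiset.mem_sort _).1 hy)).2
        omega
    · intro x hx y hy
      have hx' := (Multiset.mem_filter.1 ((Multiset.mem_sort _).1 hx)).2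
      rcases List.mem_append.1 hy with hy | hy
      · have := List.eq_of_mem_replicate hy; omega
      · have := (Multiset.mem_filter.1 ((Multiset.mem_sort _).1 hy)).2; omega

lemma length_sortedDesc (s : Multiset ℕ) : (sortedDesc s).length = Multiset.card s := by
  simp [sortedDesc]

lemma pad_decomp (s : Multiset ℕ) (k n : ℕ) :
    pad (sortedDesc s) n =
      (Multiset.sort (s.filter (fun x => k < x)) (· ≤ ·)).reverse ++
        (List.replicate (s.count k) k ++
          ((Multiset.sort (s.filter (fun x => x < k)) (· ≤ ·)).reverse ++
            List.replicate (n - Multiset.card s) 0)) := by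
  have h := length_sortedDesc s
  rw [pad, h]
  conv_lhs => rw [sortedDesc, sort_decomp s k]
  simp [List.reverse_append, List.reverse_replicate, List.append_assoc]

lemma lex_append_left {l l₁ l₂ : List ℕ} (h : List.Lex (· < ·) l₁ l₂) :
    List.Lex (· < ·) (l ++ l₁) (l ++ l₂) := by
  induction l with
  | nil => exact h
  | cons a t ih => exact List.Lex.cons ih

lemma rep_lex {k : ℕ} : ∀ {ca cb : ℕ} (l₁ l₂ : List ℕ), ca < cb → (∀ x ∈ l₁, x < k) →
    List.Lex (· < ·) (List.replicate ca k ++ l₁) (List.replicate cb k ++ l₂) := by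
  intro ca
  induction ca with
  | zero =>
    intro cb l₁ l₂ hlt h1
    obtain ⟨c, rfl⟩ : ∃ c, cb = c + 1 := ⟨cb - 1, by omega⟩
    rw [List.replicate_succ]
    cases l₁ with
    | nil => exact List.Lex.nil
    | cons x t => exact List.Lex.rel (h1 x List.mem_cons_self)
  | succ m ih =>
    intro cb l₁ l₂ hlt h1
    obtain ⟨c, rfl⟩ : ∃ c, cb = c + 1 := ⟨cb - 1, by omega⟩
    rw [List.replicate_succ, List.replicate_succ]
    exact List.Lex.cons (ih l₁ l₂ (by omega) h1)

lemma keyLex {a b : Multiset ℕ} {k n : ℕ} (hk : 1 ≤ k)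
    (hab : ∀ j, k < j → a.count j = b.count j) (hc : a.count k < b.count k) :
    List.Lex (· < ·) (pad (sortedDesc a) n) (pad (sortedDesc b) n) := by
  rw [pad_decomp a k n, pad_decomp b k n]
  have hfil : a.filter (fun x => k < x) = b.filter (fun x => k < x) := by
    ext j
    simp only [Multiset.count_filter]
    split_ifs with h
    · exact hab j h
    · rfl
  rw [hfil]
  apply lex_append_left
  apply rep_lex _ _ hc
  intro x hx
  rcases List.mem_append.1 hx with h | h
  · exact (Multiset.mem_filter.1 ((Multiset.mem_sort _).1 (List.mem_reverse.1 h))).2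
  · have := List.eq_of_mem_replicate h; omega

lemma card_filter_pos (s : Multiset ℕ) :
    Multiset.card (s.filter (fun x => 0 < x)) + s.count 0 = Multiset.card s := by
  have h1 : s.filter (fun x => ¬ 0 < x) = Multiset.replicate (s.count 0) 0 := by
    ext j
    simp only [Multiset.count_filter, Multiset.count_replicate]
    rcases Nat.eq_zero_or_pos j with rfl | h
    · simp
    · simp [h, (show (0:ℕ) ≠ j by omega)]
  conv_rhs => rw [← Multiset.filter_add_not (fun x => 0 < x) s]
  rw [Multiset.card_add, h1, Multiset.card_replicate]

lemma pad_eq_pos (s : Multiset ℕ) (n : ℕ) (hn : Multiset.card s ≤ n) :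
    pad (sortedDesc s) n =
      (Multiset.sort (s.filter (fun x => 0 < x)) (· ≤ ·)).reverse ++
        List.replicate (n - Multiset.card (s.filter (fun x => 0 < x))) 0 := by
  rw [pad_decomp s 0 n]
  have h0 : s.filter (fun x => x < 0) = 0 := by
    rw [Multiset.filter_eq_nil]
    intro a _; omega
  rw [h0, Multiset.sort_zero]
  have hcf := card_filter_pos s
  simp only [List.reverse_nil, List.nil_append]
  have harith : s.count 0 + (n - Multiset.card s) =
      n - Multiset.card (s.filter (fun x => 0 < x)) := by omega
  rw [← List.replicate_add, harith]

lemma pad_congr {s t : Multiset ℕ} {n : ℕ}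
    (hfe : s.filter (fun x => 0 < x) = t.filter (fun x => 0 < x))
    (hns : Multiset.card s ≤ n) (hnt : Multiset.card t ≤ n) :
    pad (sortedDesc s) n = pad (sortedDesc t) n := by
  rw [pad_eq_pos s n hns, pad_eq_pos t n hnt, hfe]

lemma trichot (s t : Multiset ℕ) :
    s.filter (fun x => 0 < x) = t.filter (fun x => 0 < x) ∨
      ∃ k, 1 ≤ k ∧ (∀ j, k < j → s.count j = t.count j) ∧
        (s.count k < t.count k ∨ t.count k < s.count k) := by
  classical
  set D : Finset ℕ :=
    (s + t).toFinset.filter (fun j => 1 ≤ j ∧ s.count j ≠ t.count j) with hD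
  by_cases hne : D.Nonempty
  · right
    refine ⟨D.max' hne, ?_, ?_, ?_⟩
    · exact (Finset.mem_filter.1 (D.max'_mem hne)).2.1
    · intro j hj
      by_contra hne2
      have hk1 : 1 ≤ D.max' hne := (Finset.mem_filter.1 (D.max'_mem hne)).2.1
      have hmem : j ∈ (s + t).toFinset := by
        rw [Multiset.mem_toFinset, Multiset.mem_add, ← Multiset.count_pos, ← Multiset.count_pos]
        omega
      have hjD : j ∈ D := Finset.mem_filter.2 ⟨hmem, by omega, hne2⟩
      exact absurd (D.le_max' j hjD) (by omega)
    · rcases Nat.lt_or_ge (s.count (D.max' hne)) (t.count (D.max' hne)) with h | h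
      · exact Or.inl h
      · refine Or.inr (lt_of_le_of_ne h ?_)
        exact fun hc => (Finset.mem_filter.1 (D.max'_mem hne)).2.2 hc.symm
  · left
    ext j
    simp only [Multiset.count_filter]
    split_ifs with h
    · by_contra hne2
      exact hne ⟨j, Finset.mem_filter.2 ⟨by
        rw [Multiset.mem_toFinset, Multiset.mem_add, ← Multiset.count_pos, ← Multiset.count_pos]
        omega, by omega, hne2⟩⟩
    · rfl

lemma lex_asymm : ∀ {l₁ l₂ : List ℕ}, List.Lex (· < ·) l₁ l₂ → ¬ List.Lex (· < ·) l₂ l₁ := by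
  intro l₁ l₂ h
  induction h with
  | nil => intro h'; cases h'
  | @cons a t₁ t₂ h ih =>
    intro h'
    cases h' with
    | cons h'' => exact ih h''
    | rel h'' => exact lt_irrefl _ h''
  | @rel a t₁ b t₂ hab =>
    intro h'
    cases h' with
    | cons h'' => exact lt_irrefl _ hab
    | rel h'' => omega

/-- The auxiliary relation on count functions: some positive value k has strictly
smaller count, and all counts above k agree. -/
def CountLT (s t : Multiset ℕ) : Prop :=
  ∃ k, 1 ≤ k ∧ (∀ j, k < j → s.count j = t.count j) ∧ s.count k < t.count k

lemma countLT_wf : WellFounded CountLT := by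
  classical
  have hwf : WellFounded (Finsupp.Lex (α := ℕ) (N := ℕ) (· > ·) (· < ·)) := by
    apply Finsupp.Lex.wellFounded'
    · exact fun n => Nat.not_lt_zero n
    · exact Nat.lt_wfRel.wf
    · exact Nat.lt_wfRel.wf
  have key : ∀ s t : Multiset ℕ, CountLT s t →
      InvImage (Finsupp.Lex (α := ℕ) (N := ℕ) (· > ·) (· < ·))
        (fun s => Multiset.toFinsupp (s.filter (fun x => 0 < x))) s t := by
    intro s t ⟨k, hk, hab, hc⟩
    refine ⟨k, ?_, ?_⟩
    · intro d hd
      simp only [Multiset.toFinsupp_apply, Multiset.count_filter]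
      have : 0 < d := by omega
      rw [if_pos this, if_pos this]
      exact hab d hd
    · simp only [Multiset.toFinsupp_apply, Multiset.count_filter]
      have : 0 < k := hk
      rw [if_pos this, if_pos this]
      exact hc
  exact Subrelation.wf (fun {s t} h => key s t h) (InvImage.wf _ hwf)

lemma gvecLT_imp_countLT {s t : Multiset ℕ} (h : gvecLT s t) : CountLT s t := by
  rcases trichot s t with heq | ⟨k, hk, hab, hc | hc⟩
  · exfalso
    have := pad_congr heq (le_max_left _ _) (le_max_right _ _)
    rw [gvecLT, this] at h
    exact lex_asymm h h
  · exact ⟨k, hk, hab, hc⟩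
  · exfalso
    have h2 : List.Lex (· < ·)
        (pad (sortedDesc t) (max (Multiset.card s) (Multiset.card t)))
        (pad (sortedDesc s) (max (Multiset.card s) (Multiset.card t))) :=
      keyLex hk (fun j hj => (hab j hj).symm) hc
    exact lex_asymm h h2

/-- termination of the procedure EMB(X). The lexicographically ordered
vector g_≥(X) of genera of boundary components (sorted non-increasingly, padded with
zeros): (a) does not increase when passing to a connected component or a prime summand
(whose boundary components form a sub-multiset of those of X); (b) strictly decreases
under a boundary compression or the attachment of a 2-handle along an essential boundary
curve; and (c) the strict order on genus vectors is well-founded, so every branch of the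
recursion tree, which has finite branching, is finite and the procedure terminates. -/
theorem emb_procedure_terminates :
    (∀ s t : Multiset ℕ, t ≤ s → gvecLE t s) ∧
    (∀ s t : Multiset ℕ, BoundaryStep s t → gvecLT t s) ∧
    WellFounded gvecLT := by
  refine ⟨?_, ?_, ?_⟩
  · -- (a)
    intro s t hts
    rcases trichot t s with heq | ⟨k, hk, hab, hc | hc⟩
    · exact Or.inr (pad_congr heq (le_max_left _ _) (le_max_right _ _))
    · exact Or.inl (keyLex hk hab hc)
    · exfalso
      have := Multiset.count_le_of_le k hts
      omega
  · -- (b)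
    intro s t hstep
    obtain ⟨g, hg, hg1, hcase⟩ := hstep
    have hgc : 0 < s.count g := Multiset.count_pos.2 hg
    refine keyLex hg1 ?_ ?_
    · intro j hj
      rcases hcase with ⟨g₁, g₂, h1, h2, hsum, rfl⟩ | rfl
      · have hj1 : j ≠ g₁ := by omega
        have hj2 : j ≠ g₂ := by omega
        have hjg : j ≠ g := by omega
        rw [Multiset.count_cons_of_ne hj1, Multiset.count_cons_of_ne hj2,
          Multiset.count_erase_of_ne hjg]
      · have hj1 : j ≠ g - 1 := by omega
        have hjg : j ≠ g := by omega
        rw [Multiset.count_cons_of_ne hj1, Multiset.count_erase_of_ne hjg]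
    · rcases hcase with ⟨g₁, g₂, h1, h2, hsum, rfl⟩ | rfl
      · have hj1 : g ≠ g₁ := by omega
        have hj2 : g ≠ g₂ := by omega
        rw [Multiset.count_cons_of_ne hj1, Multiset.count_cons_of_ne hj2,
          Multiset.count_erase_self]
        omega
      · have hj1 : g ≠ g - 1 := by omega
        rw [Multiset.count_cons_of_ne hj1, Multiset.count_erase_self]
        omega
  · -- (c)
    exact Subrelation.wf (fun {s t} h => gvecLT_imp_countLT h) countLT_wf
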